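/- arXiv:1405.6467 — 3 statements merged into one kernel-verified Lean document; each statement's English description precedes it below -/
import Mathlib

section
/- Let Λ be the 2p×2p real block matrix Λ = [[-XL, Z], [-YL, 0]] where L, X, Y, Z are p×p real matrices with L symmetric positive definite, X + Xᵀ positive definite, Y symmetric and invertible, Y⁻¹Z symmetric positive semidefinite, and Z invertible. Then Λ is Hurwitz, i.e., every eigenvalue of Λ has negative real part. -/
open Matrix Complex

section helpers
variable {n : Type*} [Fintype n]

private lemma mapc_mul (A B : Matrix n n ℝ) : (A * B).map Complex.ofReal
    = A.map Complex.ofReal * B.map Complex.ofReal := by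
  ext i j; simp [Matrix.mul_apply]

private lemma re_inner (A : Matrix n n ℝ) (x y : n → ℂ) :
    (star x ⬝ᵥ (A.map Complex.ofReal).mulVec y).re
      = (fun i => (x i).re) ⬝ᵥ A.mulVec (fun i => (y i).re)
      + (fun i => (x i).im) ⬝ᵥ A.mulVec (fun i => (y i).im) := by
  simp only [dotProduct, mulVec, map_apply, Pi.star_apply, Finset.mul_sum, Complex.re_sum]
  rw [← Finset.sum_add_distrib]
  refine Finset.sum_congr rfl fun i _ => ?_
  rw [← Finset.sum_add_distrib]
  refine Finset.sum_congr rfl fun j _ => ?_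
  simp [Complex.mul_re, Complex.mul_im]
  try ring

private lemma im_inner (A : Matrix n n ℝ) (x y : n → ℂ) :
    (star x ⬝ᵥ (A.map Complex.ofReal).mulVec y).im
      = (fun i => (x i).re) ⬝ᵥ A.mulVec (fun i => (y i).im)
      - (fun i => (x i).im) ⬝ᵥ A.mulVec (fun i => (y i).re) := by
  simp only [dotProduct, mulVec, map_apply, Pi.star_apply, Finset.mul_sum, Complex.im_sum]
  rw [← Finset.sum_sub_distrib]
  refine Finset.sum_congr rfl fun i _ => ?_
  rw [← Finset.sum_sub_distrib]
  refine Finset.sum_congr rfl fun j _ => ?_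
  simp [Complex.mul_re, Complex.mul_im]
  try ring

private lemma dot_transpose (A : Matrix n n ℝ) (x y : n → ℝ) :
    x ⬝ᵥ Aᵀ.mulVec y = y ⬝ᵥ A.mulVec x := by
  rw [Matrix.dotProduct_mulVec, Matrix.vecMul_transpose, dotProduct_comm]

private lemma dot_symm {A : Matrix n n ℝ} (hA : A.IsSymm) (x y : n → ℝ) :
    x ⬝ᵥ A.mulVec y = (A.mulVec x) ⬝ᵥ y := by
  rw [Matrix.dotProduct_mulVec]
  conv_lhs => rw [← hA.eq]
  rw [Matrix.vecMul_transpose]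

private lemma im_quad_symm {A : Matrix n n ℝ} (hA : A.IsSymm) (x : n → ℂ) :
    (star x ⬝ᵥ (A.map Complex.ofReal).mulVec x).im = 0 := by
  rw [im_inner]
  have := dot_transpose A (fun i => (x i).im) (fun i => (x i).re)
  rw [hA.eq] at this
  linarith

end helpers

/-- If `L` is symmetric positive definite, `X + Xᵀ` is positive definite, `Y` is symmetric
and invertible, `Y⁻¹Z` is symmetric positive semidefinite, and `Z` is invertible, then the
block matrix `Λ = [[-XL, Z], [-YL, 0]]` is Hurwitz: every eigenvalue has negative real part. -/
theorem stmt1 (p : ℕ) (L X Y Z : Matrix (Fin p) (Fin p) ℝ)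
    (hL : L.PosDef) (hX : (X + Xᵀ).PosDef)
    (hY : Y.IsSymm) (hYinv : IsUnit Y)
    (hYZ : (Y⁻¹ * Z).PosSemidef) (hZ : IsUnit Z) :
    ∀ (lam : ℂ) (v : (Fin p ⊕ Fin p) → ℂ), v ≠ 0 →
      ((Matrix.fromBlocks (-(X * L)) Z (-(Y * L)) 0).map (Complex.ofReal)).mulVec v
        = lam • v → lam.re < 0 := by
  intro lam v hv heig
  set a : Fin p → ℂ := v ∘ Sum.inl with ha
  set b : Fin p → ℂ := v ∘ Sum.inr with hb
  set M : Matrix (Fin p) (Fin p) ℝ := Y⁻¹ * Z with hM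
  -- extract block equations
  rw [Matrix.fromBlocks_map, Matrix.fromBlocks_mulVec] at heig
  have h1 : (-(X*L)).map Complex.ofReal *ᵥ a + Z.map Complex.ofReal *ᵥ b = lam • a := by
    funext i
    have := congrFun heig (Sum.inl i)
    simpa [ha, hb] using this
  have h2 : (-(Y*L)).map Complex.ofReal *ᵥ a = lam • b := by
    funext i
    have := congrFun heig (Sum.inr i)
    simpa [ha, hb, Matrix.map_zero _ Complex.ofReal_zero] using this
  -- Z is invertible over ℂ
  have hZdet : IsUnit Z.det := (Matrix.isUnit_iff_isUnit_det Z).mp hZ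
  have hYdet : IsUnit Y.det := (Matrix.isUnit_iff_isUnit_det Y).mp hYinv
  have hZc : ∀ w : Fin p → ℂ, Z.map Complex.ofReal *ᵥ w = 0 → w = 0 := by
    intro w hw
    have h1 : (Z⁻¹ * Z).map Complex.ofReal *ᵥ w = 0 := by
      rw [mapc_mul, ← Matrix.mulVec_mulVec, hw, Matrix.mulVec_zero]
    rwa [Matrix.nonsing_inv_mul Z hZdet, Matrix.map_one _ Complex.ofReal_zero
      Complex.ofReal_one, Matrix.one_mulVec] at h1
  -- a ≠ 0
  have hane : a ≠ 0 := by
    intro ha0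
    apply hv
    have hb0 : b = 0 := by
      apply hZc
      have := h1
      rw [ha0, Matrix.mulVec_zero, zero_add, smul_zero] at this
      exact this
    funext i
    cases i with
    | inl i => exact congrFun ha0 i
    | inr i => exact congrFun hb0 i
  -- M is symmetric, M*Y = Zᵀ
  have hMsymm : M.IsSymm := hYZ.isHermitian
  have hMY : M * Y = Zᵀ := by
    have hMt : Zᵀ * Y⁻¹ = M := by
      calc Zᵀ * Y⁻¹ = Zᵀ * (Yᵀ)⁻¹ := by rw [hY.eq]
        _ = Zᵀ * (Y⁻¹)ᵀ := by rw [Matrix.transpose_nonsing_inv]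
        _ = (Y⁻¹ * Z)ᵀ := (Matrix.transpose_mul _ _).symm
        _ = M := hMsymm.eq
    rw [← hMt, Matrix.mul_assoc, Matrix.nonsing_inv_mul Y hYdet, Matrix.mul_one]
  have hLsymm : L.IsSymm := by
    rw [Matrix.IsSymm, ← Matrix.conjTranspose_eq_transpose_of_trivial]
    exact hL.isHermitian
  -- real/imag parts
  set ar : Fin p → ℝ := fun i => (a i).re with har
  set ai : Fin p → ℝ := fun i => (a i).im with hai
  set br : Fin p → ℝ := fun i => (b i).re with hbr
  set bi : Fin p → ℝ := fun i => (b i).im with hbi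
  -- scalars
  set s1 : ℂ := star a ⬝ᵥ (L.map Complex.ofReal) *ᵥ a with hs1
  set s2 : ℂ := star b ⬝ᵥ (M.map Complex.ofReal) *ᵥ b with hs2
  -- main scalar identity
  have key : lam.re * (s1 + s2).re
      = -(ar ⬝ᵥ (L*X*L).mulVec ar + ai ⬝ᵥ (L*X*L).mulVec ai) := by
    have hT : star a ⬝ᵥ (L.map Complex.ofReal) *ᵥ (lam • a)
        + star b ⬝ᵥ (M.map Complex.ofReal) *ᵥ (lam • b)
        = lam * (s1 + s2) := by
      rw [Matrix.mulVec_smul, Matrix.mulVec_smul, dotProduct_smul,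
        dotProduct_smul]
      simp [hs1, hs2, mul_add]
    rw [← h1, ← h2] at hT
    have hT2 : -(star a ⬝ᵥ ((L*X*L).map Complex.ofReal) *ᵥ a)
        + star a ⬝ᵥ ((L*Z).map Complex.ofReal) *ᵥ b
        - star b ⬝ᵥ ((Zᵀ*L).map Complex.ofReal) *ᵥ a
        = lam * (s1 + s2) := by
      rw [← hT]
      rw [Matrix.mulVec_add]
      rw [show (-(X*L)).map Complex.ofReal = -((X*L).map Complex.ofReal) from by
        ext i j; simp, show (-(Y*L)).map Complex.ofReal = -((Y*L).map Complex.ofReal) from by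
        ext i j; simp]
      simp only [Matrix.neg_mulVec, Matrix.mulVec_neg, Matrix.mulVec_add,
        dotProduct_add, dotProduct_neg, Matrix.mulVec_mulVec,
        ← mapc_mul, ← Matrix.mul_assoc, hMY]
      ring
    -- take real parts
    have hre := congrArg Complex.re hT2
    rw [Complex.mul_re] at hre
    have him : (s1 + s2).im = 0 := by
      rw [Complex.add_im, hs1, hs2, im_quad_symm hLsymm, im_quad_symm hMsymm]
      ring
    rw [him, mul_zero, sub_zero] at hre
    rw [← hre]
    simp only [Complex.sub_re, Complex.add_re, Complex.neg_re]
    rw [re_inner, re_inner, re_inner]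
    have hcross1 : br ⬝ᵥ (Zᵀ*L).mulVec ar = ar ⬝ᵥ (L*Z).mulVec br := by
      have : (L*Z)ᵀ = Zᵀ*L := by rw [Matrix.transpose_mul, hLsymm.eq]
      rw [← this, dot_transpose]
    have hcross2 : bi ⬝ᵥ (Zᵀ*L).mulVec ai = ai ⬝ᵥ (L*Z).mulVec bi := by
      have : (L*Z)ᵀ = Zᵀ*L := by rw [Matrix.transpose_mul, hLsymm.eq]
      rw [← this, dot_transpose]
    rw [hcross1, hcross2]
    ring
  -- positivity facts
  have hLu : ∀ x : Fin p → ℝ, x ≠ 0 → L.mulVec x ≠ 0 := by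
    intro x hx hLx
    have := hL.dotProduct_mulVec_pos hx
    rw [hLx, dotProduct_zero] at this
    exact lt_irrefl _ this
  have hquadX : ∀ x : Fin p → ℝ, 0 ≤ x ⬝ᵥ (L*X*L).mulVec x ∧
      (x ≠ 0 → 0 < x ⬝ᵥ (L*X*L).mulVec x) := by
    intro x
    have hrw : x ⬝ᵥ (L*X*L).mulVec x
        = (1:ℝ)/2 * ((L.mulVec x) ⬝ᵥ (X+Xᵀ).mulVec (L.mulVec x)) := by
      have h1 : x ⬝ᵥ (L*X*L).mulVec x = (L.mulVec x) ⬝ᵥ X.mulVec (L.mulVec x) := by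
        rw [Matrix.mul_assoc, ← Matrix.mulVec_mulVec, dot_symm hLsymm,
          ← Matrix.mulVec_mulVec]
      have h2 : (L.mulVec x) ⬝ᵥ Xᵀ.mulVec (L.mulVec x)
          = (L.mulVec x) ⬝ᵥ X.mulVec (L.mulVec x) := dot_transpose X _ _
      rw [h1, Matrix.add_mulVec, dotProduct_add, h2]
      ring
    constructor
    · rw [hrw]
      have := hX.posSemidef.dotProduct_mulVec_nonneg (L.mulVec x)
      simp only [star_trivial] at this
      positivity
    · intro hx
      rw [hrw]
      have := hX.dotProduct_mulVec_pos (hLu x hx)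
      simp only [star_trivial] at this
      positivity
  -- s1.re > 0
  have hs1pos : 0 < s1.re := by
    rw [hs1, re_inner]
    have h1 := hL.posSemidef.dotProduct_mulVec_nonneg ar
    have h2 := hL.posSemidef.dotProduct_mulVec_nonneg ai
    simp only [star_trivial] at h1 h2
    have hne : ar ≠ 0 ∨ ai ≠ 0 := by
      by_contra hc
      push_neg at hc
      apply hane
      funext i
      have h1 := congrFun hc.1 i
      have h2 := congrFun hc.2 i
      simp only [har, hai] at h1 h2
      exact Complex.ext h1 h2
    rcases hne with h | h
    · have := hL.dotProduct_mulVec_pos h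
      simp only [star_trivial] at this
      linarith
    · have := hL.dotProduct_mulVec_pos h
      simp only [star_trivial] at this
      linarith
  have hs2nn : 0 ≤ s2.re := by
    rw [hs2, re_inner]
    have h1 := hYZ.dotProduct_mulVec_nonneg br
    have h2 := hYZ.dotProduct_mulVec_nonneg bi
    simp only [star_trivial] at h1 h2
    linarith
  -- finish
  have hrhs : -(ar ⬝ᵥ (L*X*L).mulVec ar + ai ⬝ᵥ (L*X*L).mulVec ai) < 0 := by
    have hne : ar ≠ 0 ∨ ai ≠ 0 := by
      by_contra hc
      push_neg at hc
      apply hane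
      funext i
      have h1 := congrFun hc.1 i
      have h2 := congrFun hc.2 i
      simp only [har, hai] at h1 h2
      exact Complex.ext h1 h2
    rcases hne with h | h
    · have := (hquadX ar).2 h
      have := (hquadX ai).1
      linarith
    · have := (hquadX ai).2 h
      have := (hquadX ar).1
      linarith
  have hdenom : 0 < (s1 + s2).re := by
    rw [Complex.add_re]; linarith
  nlinarith [key, hrhs, hdenom, mul_pos hdenom hdenom]
end

section
/- Let Λ be the 2p×2p real block matrix Λ = [[0, Z], [-YL₁, -YL₂Z]] where L₁, L₂, Y, Z are p×p real matrices with L₁ symmetric and invertible, L₂ symmetric positive definite, Y symmetric and invertible, and Y⁻¹Z symmetric positive definite. Then Λ has no eigenvalues on the imaginary axis. -/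
open Matrix Complex
open scoped ComplexOrder

private lemma mapC_mul' {n : ℕ} (M N : Matrix (Fin n) (Fin n) ℝ) :
    (M * N).map Complex.ofReal = M.map Complex.ofReal * N.map Complex.ofReal :=
  Matrix.map_mul (f := Complex.ofRealHom)

private lemma mapC_isUnit' {n : ℕ} {M : Matrix (Fin n) (Fin n) ℝ} (h : IsUnit M) :
    IsUnit (M.map Complex.ofReal) :=
  h.map (Complex.ofRealHom.mapMatrix)

private lemma mapC_transpose' {n : ℕ} (B : Matrix (Fin n) (Fin n) ℝ) :
    Bᵀ.map Complex.ofReal = (B.map Complex.ofReal)ᴴ := by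
  rw [conjTranspose, transpose_map]
  ext i j
  simp [Complex.conj_ofReal]

private lemma mapC_herm' {n : ℕ} {M : Matrix (Fin n) (Fin n) ℝ} (h : M.IsSymm) :
    (M.map Complex.ofReal).IsHermitian := by
  have : M.IsHermitian := by
    rwa [Matrix.IsHermitian, conjTranspose_eq_transpose_of_trivial]
  exact this.map Complex.ofReal fun r => (Complex.conj_ofReal r).symm

private lemma mapC_psd' {n : ℕ} {M : Matrix (Fin n) (Fin n) ℝ} (h : M.PosSemidef) :
    (M.map Complex.ofReal).PosSemidef := by
  obtain ⟨B, rfl⟩ : ∃ B : Matrix (Fin n) (Fin n) ℝ, M = Bᴴ * B := by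
    classical
    open scoped MatrixOrder in
    obtain ⟨X, hX, -, hXX⟩ := CFC.exists_sqrt_of_isSelfAdjoint_of_quasispectrumRestricts
      h.isHermitian (QuasispectrumRestricts.nnreal_of_nonneg h.nonneg)
    exact ⟨X, by rw [← hXX]; exact congrArg (· * X) hX.symm⟩
  have hBH : (Bᴴ : Matrix (Fin n) (Fin n) ℝ) = Bᵀ := conjTranspose_eq_transpose_of_trivial B
  rw [hBH, mapC_mul', mapC_transpose']
  exact Matrix.posSemidef_conjTranspose_mul_self _

private lemma herm_real' {n : ℕ} {A : Matrix (Fin n) (Fin n) ℂ} (hA : A.IsHermitian)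
    (x : Fin n → ℂ) : (star x ⬝ᵥ A *ᵥ x).im = 0 := by
  have h1 : star x ⬝ᵥ A *ᵥ x = star (star x ⬝ᵥ A *ᵥ x) := by
    conv_lhs => rw [star_dotProduct]
    congr 1
    rw [star_mulVec, ← dotProduct_mulVec, hA.eq]
  exact Complex.conj_eq_iff_im.mp h1.symm

private lemma mulVec_zero_of_unit' {n : ℕ} {M : Matrix (Fin n) (Fin n) ℂ} (h : IsUnit M)
    {x : Fin n → ℂ} (hx : M *ᵥ x = 0) : x = 0 := by
  have hinj := Matrix.mulVec_injective_iff_isUnit.mpr h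
  apply hinj
  simp [hx]

/-- If `L₁` is symmetric invertible, `L₂` symmetric positive definite, `Y` symmetric invertible,
and `Y⁻¹Z` symmetric positive definite, then `Λ = [[0, Z], [-YL₁, -YL₂Z]]` has no eigenvalues
on the imaginary axis. -/
theorem stmt3 (p : ℕ) (L₁ L₂ Y Z : Matrix (Fin p) (Fin p) ℝ)
    (hL₁ : L₁.IsSymm) (hL₁inv : IsUnit L₁)
    (hL₂ : L₂.PosDef)
    (hY : Y.IsSymm) (hYinv : IsUnit Y)
    (hYZ : (Y⁻¹ * Z).PosDef) :
    ¬ ∃ (lam : ℝ) (v : (Fin p ⊕ Fin p) → ℂ), v ≠ 0 ∧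
      ((Matrix.fromBlocks 0 Z (-(Y * L₁)) (-(Y * (L₂ * Z)))).map
          (Complex.ofReal)).mulVec v = (Complex.I * lam) • v := by
  classical
  rintro ⟨lam, v, hv0, hv⟩
  set c : ℂ := Complex.I * lam with hc
  set x : Fin p → ℂ := fun i => v (Sum.inl i) with hxdef
  set y : Fin p → ℂ := fun i => v (Sum.inr i) with hydef
  have hvelim : v = Sum.elim x y := by funext i; cases i <;> rfl
  rw [hvelim, Matrix.fromBlocks_map, Matrix.fromBlocks_mulVec] at hv
  -- the two block equations
  have h1 : Z.map Complex.ofReal *ᵥ y = c • x := by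
    funext i
    have h := congrFun hv (Sum.inl i)
    simpa using h
  have hneg : ∀ M : Matrix (Fin p) (Fin p) ℝ, (-M).map Complex.ofReal = -(M.map Complex.ofReal) :=
    fun M => by ext i j; simp
  have h2 : (Y * L₁).map Complex.ofReal *ᵥ x + (Y * (L₂ * Z)).map Complex.ofReal *ᵥ y
      = (-c) • y := by
    funext i
    have h := congrFun hv (Sum.inr i)
    simp only [hneg, Matrix.neg_mulVec, Sum.elim_inr, Sum.elim_comp_inl, Sum.elim_comp_inr,
      Pi.add_apply, Pi.neg_apply, Pi.smul_apply, smul_eq_mul, neg_mul] at h ⊢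
    linear_combination -h
  -- units
  have hYdet : IsUnit Y.det := (Matrix.isUnit_iff_isUnit_det Y).mp hYinv
  have hZunit : IsUnit Z := by
    have hZeq : Y * (Y⁻¹ * Z) = Z := by
      rw [← Matrix.mul_assoc, Matrix.mul_nonsing_inv _ hYdet, Matrix.one_mul]
    exact hZeq ▸ hYinv.mul hYZ.isUnit
  -- the key matrix identity  Zᵀ Y⁻¹ = Y⁻¹ Z
  have hYZsymm : (Y⁻¹ * Z).IsSymm := by
    rw [Matrix.IsSymm, ← conjTranspose_eq_transpose_of_trivial]
    exact hYZ.1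
  have hS : Zᵀ * Y⁻¹ = Y⁻¹ * Z := by
    have hYi : (Y⁻¹)ᵀ = Y⁻¹ := by
      rw [Matrix.transpose_nonsing_inv, hY.eq]
    calc Zᵀ * Y⁻¹ = Zᵀ * (Y⁻¹)ᵀ := by rw [hYi]
      _ = (Y⁻¹ * Z)ᵀ := (Matrix.transpose_mul _ _).symm
      _ = Y⁻¹ * Z := hYZsymm.eq
  rcases eq_or_ne lam 0 with h0 | h0
  · -- λ = 0 : both blocks invertible force v = 0
    have hc0 : c = 0 := by simp [hc, h0]
    have hy0 : y = 0 := by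
      refine mulVec_zero_of_unit' (mapC_isUnit' hZunit) ?_
      rw [h1, hc0, zero_smul]
    have hx0 : x = 0 := by
      refine mulVec_zero_of_unit' (mapC_isUnit' (hYinv.mul hL₁inv)) ?_
      have := h2
      rw [hy0, Matrix.mulVec_zero, add_zero, hc0, neg_zero, zero_smul] at this
      exact this
    exact hv0 (by rw [hvelim, hx0, hy0]; funext i; cases i <;> rfl)
  · -- λ ≠ 0
    have hcne : c ≠ 0 := by
      simp only [hc]
      exact mul_ne_zero Complex.I_ne_zero (by exact_mod_cast h0)
    -- multiply second equation by Y⁻¹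
    have e1 : Y⁻¹ * (Y * L₁) = L₁ := by
      rw [← Matrix.mul_assoc, Matrix.nonsing_inv_mul _ hYdet, Matrix.one_mul]
    have e2 : Y⁻¹ * (Y * (L₂ * Z)) = L₂ * Z := by
      rw [← Matrix.mul_assoc, Matrix.nonsing_inv_mul _ hYdet, Matrix.one_mul]
    have h2b : L₁.map Complex.ofReal *ᵥ x + (L₂ * Z).map Complex.ofReal *ᵥ y
        = (-c) • (Y⁻¹.map Complex.ofReal *ᵥ y) := by
      have h := congrArg (fun w => Y⁻¹.map Complex.ofReal *ᵥ w) h2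
      simpa [Matrix.mulVec_add, Matrix.mulVec_smul, Matrix.mulVec_neg, Matrix.mulVec_mulVec,
        ← mapC_mul', e1, e2, neg_smul] using h
    -- quadratic forms
    set a : ℂ := star x ⬝ᵥ L₁.map Complex.ofReal *ᵥ x with hadef
    set b : ℂ := star x ⬝ᵥ L₂.map Complex.ofReal *ᵥ x with hbdef
    set s : ℂ := star y ⬝ᵥ (Y⁻¹ * Z).map Complex.ofReal *ᵥ y with hsdef
    -- term (L₂ Z) y = c • L₂ x
    have hterm : (L₂ * Z).map Complex.ofReal *ᵥ y = c • (L₂.map Complex.ofReal *ᵥ x) := by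
      rw [mapC_mul', ← Matrix.mulVec_mulVec, h1, Matrix.mulVec_smul]
    -- t := x* Y⁻¹ y  satisfies  (-c) * t = s
    have ht : (-c) * (star x ⬝ᵥ Y⁻¹.map Complex.ofReal *ᵥ y) = s := by
      have hx1 : x = c⁻¹ • (Z.map Complex.ofReal *ᵥ y) := by
        rw [h1, smul_smul, inv_mul_cancel₀ hcne, one_smul]
      have inner : star (Z.map Complex.ofReal *ᵥ y) ⬝ᵥ Y⁻¹.map Complex.ofReal *ᵥ y = s := by
        rw [star_mulVec, ← Matrix.dotProduct_mulVec, Matrix.mulVec_mulVec,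
          ← mapC_transpose', ← mapC_mul', hS, hsdef]
      rw [hx1, star_smul, smul_dotProduct, inner]
      have hstarc : (star (c⁻¹) : ℂ) = (-c)⁻¹ := by
        rw [star_inv₀]
        congr 1
        simp [hc, Complex.ext_iff]
      rw [hstarc, smul_eq_mul, ← mul_assoc, mul_inv_cancel₀ (neg_ne_zero.mpr hcne), one_mul]
    -- main scalar identity  a + c b = s
    have hmain : a + c * b = s := by
      have h := congrArg (fun w => star x ⬝ᵥ w) h2b
      simp only [dotProduct_add, dotProduct_smul, hterm, smul_eq_mul] at h
      rw [← hadef, ← hbdef] at h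
      linear_combination h + ht
    -- realness
    have hL₂symm : L₂.IsSymm := by
      rw [Matrix.IsSymm, ← conjTranspose_eq_transpose_of_trivial]; exact hL₂.1
    have ha : a.im = 0 := herm_real' (mapC_herm' hL₁) x
    have hb : b.im = 0 := herm_real' (mapC_herm' hL₂symm) x
    have hs : s.im = 0 := herm_real' (mapC_herm' hYZsymm) y
    -- take imaginary parts : λ * b.re = 0
    have him : lam * b.re = 0 := by
      have := congrArg Complex.im hmain
      simp only [Complex.add_im, Complex.mul_im, hc, Complex.mul_re, Complex.mul_im,
        Complex.I_re, Complex.I_im, Complex.ofReal_re, Complex.ofReal_im, ha, hb, hs] at this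
      linarith [this]
    have hbre : b.re = 0 := by
      rcases mul_eq_zero.mp him with h | h
      · exact absurd h h0
      · exact h
    have hb0 : b = 0 := Complex.ext hbre hb
    -- conclude x = 0
    have hx0 : x = 0 := by
      have hmv : L₂.map Complex.ofReal *ᵥ x = 0 :=
        ((mapC_psd' hL₂.posSemidef).dotProduct_mulVec_zero_iff x).mp hb0
      exact mulVec_zero_of_unit' (mapC_isUnit' hL₂.isUnit) hmv
    have hy0 : y = 0 := by
      refine mulVec_zero_of_unit' (mapC_isUnit' hZunit) ?_
      rw [h1, hx0, smul_zero]
    exact hv0 (by rw [hvelim, hx0, hy0]; funext i; cases i <;> rfl)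
end

section
/- Let L₁, L₂, Y, Z be p×p real matrices with L₁ symmetric and invertible, L₂ symmetric positive definite, Y symmetric and invertible, and Y⁻¹Z symmetric positive definite. Let Λ = [[0, Z], [-YL₁, -YL₂Z]] and H = [[-L₁⁻¹, 0], [0, -Z⁻¹Y]]. Then H is symmetric and invertible, and ΛH + HΛᵀ = [[0,0],[0, 2YL₂Y]], which is positive semidefinite. -/
open Matrix

lemma psd_block {p : ℕ} {M : Matrix (Fin p) (Fin p) ℝ} (hM : M.PosSemidef) :
    (Matrix.fromBlocks (0 : Matrix (Fin p) (Fin p) ℝ) 0 0 M).PosSemidef := by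
  rw [posSemidef_iff_dotProduct_mulVec]
  constructor
  · rw [isHermitian_fromBlocks_iff]
    refine ⟨isHermitian_zero, by simp, by simp, hM.1⟩
  · intro x
    have h := hM.dotProduct_mulVec_nonneg (x ∘ Sum.inr)
    simp only [fromBlocks_mulVec, zero_mulVec, zero_add, add_zero, dotProduct,
      Fintype.sum_sum_type, Sum.elim_inl, Sum.elim_inr, Pi.zero_apply, mul_zero,
      Finset.sum_const_zero, zero_add] at *
    convert h using 2
    rfl

/-- With `L₁` symmetric invertible, `L₂` symmetric positive definite, `Y` symmetric invertible,
`Y⁻¹Z` symmetric positive definite, `Λ = [[0, Z], [-YL₁, -YL₂Z]]` and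
`H = [[-L₁⁻¹, 0], [0, -Z⁻¹Y]]`, the matrix `H` is symmetric and invertible and
`ΛH + HΛᵀ = [[0,0],[0,2YL₂Y]]`, which is positive semidefinite. -/
theorem stmt4 (p : ℕ) (L₁ L₂ Y Z : Matrix (Fin p) (Fin p) ℝ)
    (hL₁ : L₁.IsSymm) (hL₁inv : IsUnit L₁)
    (hL₂ : L₂.PosDef)
    (hY : Y.IsSymm) (hYinv : IsUnit Y)
    (hYZ : (Y⁻¹ * Z).PosDef) :
    let Λ : Matrix (Fin p ⊕ Fin p) (Fin p ⊕ Fin p) ℝ :=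
      Matrix.fromBlocks 0 Z (-(Y * L₁)) (-(Y * (L₂ * Z)))
    let H : Matrix (Fin p ⊕ Fin p) (Fin p ⊕ Fin p) ℝ :=
      Matrix.fromBlocks (-(L₁⁻¹)) 0 0 (-(Z⁻¹ * Y))
    H.IsSymm ∧ IsUnit H ∧
      Λ * H + H * Λᵀ = Matrix.fromBlocks 0 0 0 ((2 : ℝ) • (Y * L₂ * Y)) ∧
      (Λ * H + H * Λᵀ).PosSemidef := by
  intro Λ H
  have hL₁det : IsUnit L₁.det := (isUnit_iff_isUnit_det _).mp hL₁inv
  have hYdet : IsUnit Y.det := (isUnit_iff_isUnit_det _).mp hYinv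
  have hYZdet : IsUnit (Y⁻¹ * Z).det := (isUnit_iff_isUnit_det _).mp hYZ.isUnit
  have hZeq : Z = Y * (Y⁻¹ * Z) := by
    rw [Matrix.mul_nonsing_inv_cancel_left _ _ hYdet]
  have hZdet : IsUnit Z.det := by
    rw [hZeq, det_mul]
    exact hYdet.mul hYZdet
  have hinv : Z⁻¹ * Y = (Y⁻¹ * Z)⁻¹ := by
    rw [Matrix.mul_inv_rev, Matrix.nonsing_inv_nonsing_inv _ hYdet]
  have hZY : (Z⁻¹ * Y).PosDef := hinv ▸ hYZ.inv
  have hL₁invsymm : (L₁⁻¹)ᵀ = L₁⁻¹ := by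
    rw [Matrix.transpose_nonsing_inv, hL₁.eq]
  have hZYsymm : (Z⁻¹ * Y)ᵀ = Z⁻¹ * Y := by
    simpa [Matrix.IsHermitian, conjTranspose_eq_transpose_of_trivial] using hZY.isHermitian
  have hHsymm : H.IsSymm := by
    show Hᵀ = H
    simp only [H, fromBlocks_transpose, transpose_neg, transpose_zero, hL₁invsymm, hZYsymm]
  have hL₂symm : L₂ᵀ = L₂ := by
    simpa [Matrix.IsHermitian, conjTranspose_eq_transpose_of_trivial] using hL₂.isHermitian
  have hYL₂Ysymm : (Y * L₂ * Y)ᵀ = Y * L₂ * Y := by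
    rw [transpose_mul, transpose_mul, hL₂symm, hY.eq, mul_assoc]
  have e1 : Z * (Z⁻¹ * Y) = Y := Matrix.mul_nonsing_inv_cancel_left _ _ hZdet
  have e2 : Y * L₁ * L₁⁻¹ = Y := Matrix.mul_nonsing_inv_cancel_right _ _ hL₁det
  have e3 : Y * (L₂ * Z) * (Z⁻¹ * Y) = Y * L₂ * Y := by
    rw [show Y * (L₂ * Z) = Y * L₂ * Z by rw [Matrix.mul_assoc],
      Matrix.mul_assoc (Y * L₂) Z, e1]
  have key : Λ * H = Matrix.fromBlocks 0 (-Y) Y (Y * L₂ * Y) := by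
    simp only [Λ, H, fromBlocks_multiply, Matrix.mul_neg, Matrix.neg_mul, neg_neg,
      Matrix.mul_zero, Matrix.zero_mul, add_zero, zero_add, neg_zero, e1, e2, e3]
  have hHLam : H * Λᵀ = (Λ * H)ᵀ := by
    rw [transpose_mul, hHsymm.eq]
  have keysum : Λ * H + H * Λᵀ = Matrix.fromBlocks 0 0 0 ((2 : ℝ) • (Y * L₂ * Y)) := by
    rw [hHLam, key, fromBlocks_transpose, fromBlocks_add]
    simp [hY.eq, hYL₂Ysymm, two_smul]
  refine ⟨hHsymm, ?_, keysum, ?_⟩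
  · rw [isUnit_iff_isUnit_det, Matrix.det_fromBlocks_zero₁₂]
    have h1 : IsUnit (-(L₁⁻¹)).det := by
      rw [det_neg, Fintype.card_fin]
      exact (isUnit_one.neg.pow p).mul (isUnit_nonsing_inv_det _ hL₁det)
    have h2 : IsUnit (-(Z⁻¹ * Y)).det := by
      rw [det_neg, Fintype.card_fin]
      refine (isUnit_one.neg.pow p).mul ?_
      rw [hinv]
      exact isUnit_nonsing_inv_det _ hYZdet
    exact h1.mul h2
  · rw [keysum]
    have hYL₂Y : (Y * L₂ * Y).PosSemidef := by
      have := hL₂.posSemidef.mul_mul_conjTranspose_same Y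
      simpa [conjTranspose_eq_transpose_of_trivial, hY.eq] using this
    have : ((2 : ℝ) • (Y * L₂ * Y)).PosSemidef := by
      rw [two_smul]
      exact hYL₂Y.add hYL₂Y
    exact psd_block this
end
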